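/- arXiv:1109.2763 — 3 statements merged into one kernel-verified Lean document; each statement's English description precedes it below -/
import Mathlib

section
/- Let N ≥ 3 and let ℓ : Fin N → Fin N be a bijection (indices taken as 1,…,N) satisfying: for all k, k' in {1,…,N}, if k' ≥ k − 1 then ℓ(k') ≥ ℓ(k) − 1. Then ℓ is the identity. -/
/-- If `ℓ` is a permutation of the indices `1,…,N` (here coded by `Fin N`, index
`k` standing for the number `(k : ℕ) + 1`) with `N ≥ 3` such that
`k' ≥ k - 1 → ℓ(k') ≥ ℓ(k) - 1` for all `k, k'`, then `ℓ` is the identity. -/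
theorem perm_step_condition_identity (N : ℕ) (hN : 3 ≤ N) (ℓ : Equiv.Perm (Fin N))
    (h : ∀ k k' : Fin N, (k' : ℕ) + 1 ≥ (k : ℕ) → (ℓ k' : ℕ) + 1 ≥ (ℓ k : ℕ)) :
    ℓ = Equiv.refl (Fin N) := by
  have key : ∀ k : Fin N, (ℓ k : ℕ) - 1 ≤ (k : ℕ) - 1 := by
    intro k
    have hb : (k : ℕ) - 1 < N := lt_of_le_of_lt (Nat.sub_le _ _) k.isLt
    have hb' : (ℓ k : ℕ) - 1 < N := lt_of_le_of_lt (Nat.sub_le _ _) (ℓ k).isLt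
    have hmaps : ∀ x ∈ Finset.Ici (⟨(k : ℕ) - 1, hb⟩ : Fin N),
        ℓ x ∈ Finset.Ici (⟨(ℓ k : ℕ) - 1, hb'⟩ : Fin N) := by
      intro x hx
      simp only [Finset.mem_Ici, Fin.le_def] at hx ⊢
      have := h k x (by omega)
      omega
    have hcard := Finset.card_le_card_of_injOn ℓ hmaps ℓ.injective.injOn
    rw [Fin.card_Ici, Fin.card_Ici] at hcard
    have h1 := k.isLt
    have h2 := (ℓ k).isLt
    simp only at hcard
    omega
  have p0 : 0 < N := by omega
  have p1 : 1 < N := by omega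
  have p2 : 2 < N := by omega
  -- rule out ℓ 0 = 1
  have hA : (ℓ ⟨0, p0⟩ : ℕ) = 0 := by
    by_contra hc
    have k0 := key ⟨0, p0⟩
    have k1 := key ⟨1, p1⟩
    have k2 := key ⟨2, p2⟩
    simp only [Fin.val_mk] at k0 k1 k2
    have h01 : (ℓ (⟨0, p0⟩ : Fin N) : ℕ) = 1 := by omega
    have hne10 : (ℓ (⟨1, p1⟩ : Fin N) : ℕ) ≠ (ℓ (⟨0, p0⟩ : Fin N) : ℕ) := by
      intro hcontra
      have := ℓ.injective (Fin.ext hcontra)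
      simp [Fin.ext_iff] at this
    have h10 : (ℓ (⟨1, p1⟩ : Fin N) : ℕ) = 0 := by omega
    have hne20 : (ℓ (⟨2, p2⟩ : Fin N) : ℕ) ≠ (ℓ (⟨0, p0⟩ : Fin N) : ℕ) := by
      intro hcontra
      have := ℓ.injective (Fin.ext hcontra)
      simp [Fin.ext_iff] at this
    have hne21 : (ℓ (⟨2, p2⟩ : Fin N) : ℕ) ≠ (ℓ (⟨1, p1⟩ : Fin N) : ℕ) := by
      intro hcontra
      have := ℓ.injective (Fin.ext hcontra)
      simp [Fin.ext_iff] at this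
    have h22 : (ℓ (⟨2, p2⟩ : Fin N) : ℕ) = 2 := by omega
    have := h ⟨2, p2⟩ ⟨1, p1⟩ (by simp only [Fin.val_mk]; omega)
    omega
  -- strong induction: ℓ k = k for all k
  have main : ∀ n : ℕ, ∀ k : Fin N, (k : ℕ) = n → (ℓ k : ℕ) = n := by
    intro n
    induction n using Nat.strong_induction_on with
    | _ n ih =>
      intro k hk
      have hle : (ℓ k : ℕ) ≤ n := by
        rcases Nat.eq_zero_or_pos n with h0 | hpos
        · subst h0
          have : k = (⟨0, p0⟩ : Fin N) := by
            apply Fin.ext; simpa using hk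
          rw [this, hA]
        · have := key k
          omega
      rcases Nat.lt_or_ge (ℓ k : ℕ) n with hlt | hge
      · exfalso
        set j : Fin N := ℓ k with hj
        have hjlt : (j : ℕ) < n := hlt
        have := ih (j : ℕ) hjlt j rfl
        -- ℓ j = j = ℓ k, so j = k, but j < n = k
        have hjk : j = k := ℓ.injective (Fin.ext this)
        omega
      · omega
  ext k
  simp [main (k : ℕ) k rfl, Fin.ext_iff]
end

section
/- Let N ≥ 8 and let ℓ be a permutation of {1,…,N} that maps even numbers to even numbers and odd numbers to odd numbers, and satisfies: whenever k and ℓ(k) are even, k' and ℓ(k') are odd, and k' ≥ k + 3, then ℓ(k') ≥ ℓ(k) + 3; and the same condition holds with ℓ replaced by ℓ⁻¹. Then ℓ fixes every even number except possibly interchanging the two even numbers among {N−3, N−2, N−1, N}, and fixes every odd number except possibly interchanging 1 and 3. In particular there are at most 4 such permutations ℓ. -/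
private lemma perm_le_of_even {N : ℕ} (ℓ : Equiv.Perm (Fin N))
    (hpar : ∀ k : Fin N, ((ℓ k : ℕ) + 1) % 2 = ((k : ℕ) + 1) % 2)
    (hfwd : ∀ k k' : Fin N, Even ((k : ℕ) + 1) → Odd ((k' : ℕ) + 1) →
      (k' : ℕ) + 1 ≥ (k : ℕ) + 1 + 3 → (ℓ k' : ℕ) + 1 ≥ (ℓ k : ℕ) + 1 + 3)
    (k : Fin N) (hk : Even ((k : ℕ) + 1)) (hk3 : (k : ℕ) + 1 + 3 ≤ N) :
    (ℓ k : ℕ) ≤ (k : ℕ) := by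
  by_contra h
  push_neg at h
  have hke := Nat.even_iff.mp hk
  set A := Finset.univ.filter
    (fun x : Fin N => ((x : ℕ) + 1) % 2 = 1 ∧ (k : ℕ) + 1 + 3 ≤ (x : ℕ) + 1) with hA
  set B := Finset.univ.filter
    (fun x : Fin N => ((x : ℕ) + 1) % 2 = 1 ∧ (ℓ k : ℕ) + 1 + 3 ≤ (x : ℕ) + 1) with hB
  have hle : A.card ≤ B.card := by
    apply Finset.card_le_card_of_injOn ℓ
    · intro x hx
      simp only [hA, hB, Finset.mem_coe, Finset.mem_filter, Finset.mem_univ, true_and] at *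
      refine ⟨by rw [hpar x]; exact hx.1, ?_⟩
      exact hfwd k x hk (Nat.odd_iff.mpr hx.1) hx.2
    · intro x _ y _ hxy
      exact ℓ.injective hxy
  have hss : B ⊂ A := by
    constructor
    · intro x hx
      simp only [hA, hB, Finset.mem_filter, Finset.mem_univ, true_and] at *
      exact ⟨hx.1, by omega⟩
    · intro hcon
      have hw : (⟨(k : ℕ) + 3, by omega⟩ : Fin N) ∈ A := by
        simp only [hA, Finset.mem_filter, Finset.mem_univ, true_and]
        constructor <;> omega
      have := hcon hw
      simp only [hB, Finset.mem_filter, Finset.mem_univ, true_and] at this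
      omega
  have := Finset.card_lt_card hss
  omega

private lemma perm_ge_of_odd {N : ℕ} (ℓ : Equiv.Perm (Fin N))
    (hpar : ∀ k : Fin N, ((ℓ k : ℕ) + 1) % 2 = ((k : ℕ) + 1) % 2)
    (hfwd : ∀ k k' : Fin N, Even ((k : ℕ) + 1) → Odd ((k' : ℕ) + 1) →
      (k' : ℕ) + 1 ≥ (k : ℕ) + 1 + 3 → (ℓ k' : ℕ) + 1 ≥ (ℓ k : ℕ) + 1 + 3)
    (k : Fin N) (hk : Odd ((k : ℕ) + 1)) (hk5 : 5 ≤ (k : ℕ) + 1) :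
    (k : ℕ) ≤ (ℓ k : ℕ) := by
  by_contra h
  push_neg at h
  have hko := Nat.odd_iff.mp hk
  set A := Finset.univ.filter
    (fun x : Fin N => ((x : ℕ) + 1) % 2 = 0 ∧ (x : ℕ) + 1 + 3 ≤ (k : ℕ) + 1) with hA
  set B := Finset.univ.filter
    (fun x : Fin N => ((x : ℕ) + 1) % 2 = 0 ∧ (x : ℕ) + 1 + 3 ≤ (ℓ k : ℕ) + 1) with hB
  have hle : A.card ≤ B.card := by
    apply Finset.card_le_card_of_injOn ℓ
    · intro x hx
      simp only [hA, hB, Finset.mem_coe, Finset.mem_filter, Finset.mem_univ, true_and] at *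
      refine ⟨by rw [hpar x]; exact hx.1, ?_⟩
      exact hfwd x k (Nat.even_iff.mpr hx.1) hk hx.2
    · intro x _ y _ hxy
      exact ℓ.injective hxy
  have hss : B ⊂ A := by
    constructor
    · intro x hx
      simp only [hA, hB, Finset.mem_filter, Finset.mem_univ, true_and] at *
      exact ⟨hx.1, by omega⟩
    · intro hcon
      have hw : (⟨(k : ℕ) - 3, by omega⟩ : Fin N) ∈ A := by
        simp only [hA, Finset.mem_filter, Finset.mem_univ, true_and]
        constructor <;> omega
      have := hcon hw
      simp only [hB, Finset.mem_filter, Finset.mem_univ, true_and] at this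
      omega
  have := Finset.card_lt_card hss
  omega

private lemma perm_fix {N : ℕ} (ℓ : Equiv.Perm (Fin N))
    (hpar : ∀ k : Fin N, ((ℓ k : ℕ) + 1) % 2 = ((k : ℕ) + 1) % 2)
    (hfwd : ∀ k k' : Fin N, Even ((k : ℕ) + 1) → Odd ((k' : ℕ) + 1) →
      (k' : ℕ) + 1 ≥ (k : ℕ) + 1 + 3 → (ℓ k' : ℕ) + 1 ≥ (ℓ k : ℕ) + 1 + 3)
    (hbwd : ∀ k k' : Fin N, Even ((k : ℕ) + 1) → Odd ((k' : ℕ) + 1) →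
      (k' : ℕ) + 1 ≥ (k : ℕ) + 1 + 3 → (ℓ.symm k' : ℕ) + 1 ≥ (ℓ.symm k : ℕ) + 1 + 3) :
    (∀ k : Fin N, Even ((k : ℕ) + 1) → (k : ℕ) + 1 + 3 ≤ N → ℓ k = k) ∧
    (∀ k : Fin N, Odd ((k : ℕ) + 1) → 5 ≤ (k : ℕ) + 1 → ℓ k = k) := by
  have hpar' : ∀ k : Fin N, ((ℓ.symm k : ℕ) + 1) % 2 = ((k : ℕ) + 1) % 2 := by
    intro k
    have := hpar (ℓ.symm k)
    rw [Equiv.apply_symm_apply] at this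
    exact this.symm
  constructor
  · intro k hk h3
    have h1 := perm_le_of_even ℓ hpar hfwd k hk h3
    have hk' : Even ((ℓ k : ℕ) + 1) := by
      rw [Nat.even_iff] at *; rw [hpar k]; exact hk
    have h2 := perm_le_of_even ℓ.symm hpar' hbwd (ℓ k) hk' (by omega)
    rw [Equiv.symm_apply_apply] at h2
    exact Fin.ext (le_antisymm h1 h2)
  · intro k hk h5
    have h1 := perm_ge_of_odd ℓ hpar hfwd k hk h5
    have hk' : Odd ((ℓ k : ℕ) + 1) := by
      rw [Nat.odd_iff] at *; rw [hpar k]; exact hk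
    have h2 := perm_ge_of_odd ℓ.symm hpar' hbwd (ℓ k) hk' (by omega)
    rw [Equiv.symm_apply_apply] at h2
    exact Fin.ext (le_antisymm h2 h1)

private lemma perm_small_odd {N : ℕ} (ℓ : Equiv.Perm (Fin N))
    (hpar : ∀ k : Fin N, ((ℓ k : ℕ) + 1) % 2 = ((k : ℕ) + 1) % 2)
    (hfwd : ∀ k k' : Fin N, Even ((k : ℕ) + 1) → Odd ((k' : ℕ) + 1) →
      (k' : ℕ) + 1 ≥ (k : ℕ) + 1 + 3 → (ℓ k' : ℕ) + 1 ≥ (ℓ k : ℕ) + 1 + 3)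
    (hbwd : ∀ k k' : Fin N, Even ((k : ℕ) + 1) → Odd ((k' : ℕ) + 1) →
      (k' : ℕ) + 1 ≥ (k : ℕ) + 1 + 3 → (ℓ.symm k' : ℕ) + 1 ≥ (ℓ.symm k : ℕ) + 1 + 3)
    (k : Fin N) (hk : ((k : ℕ) + 1) % 2 = 1) (hk5 : (k : ℕ) + 1 < 5) :
    ((ℓ k : ℕ) + 1) % 2 = 1 ∧ (ℓ k : ℕ) + 1 < 5 := by
  have hp : ((ℓ k : ℕ) + 1) % 2 = 1 := by rw [hpar]; exact hk
  refine ⟨hp, ?_⟩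
  by_contra h
  push_neg at h
  have hfix := (perm_fix ℓ hpar hfwd hbwd).2 (ℓ k) (Nat.odd_iff.mpr hp) h
  have := ℓ.injective hfix
  omega

private lemma perm_big_even {N : ℕ} (ℓ : Equiv.Perm (Fin N))
    (hpar : ∀ k : Fin N, ((ℓ k : ℕ) + 1) % 2 = ((k : ℕ) + 1) % 2)
    (hfwd : ∀ k k' : Fin N, Even ((k : ℕ) + 1) → Odd ((k' : ℕ) + 1) →
      (k' : ℕ) + 1 ≥ (k : ℕ) + 1 + 3 → (ℓ k' : ℕ) + 1 ≥ (ℓ k : ℕ) + 1 + 3)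
    (hbwd : ∀ k k' : Fin N, Even ((k : ℕ) + 1) → Odd ((k' : ℕ) + 1) →
      (k' : ℕ) + 1 ≥ (k : ℕ) + 1 + 3 → (ℓ.symm k' : ℕ) + 1 ≥ (ℓ.symm k : ℕ) + 1 + 3)
    (k : Fin N) (hk : ((k : ℕ) + 1) % 2 = 0) (hk3 : N < (k : ℕ) + 1 + 3) :
    ((ℓ k : ℕ) + 1) % 2 = 0 ∧ N < (ℓ k : ℕ) + 1 + 3 := by
  have hp : ((ℓ k : ℕ) + 1) % 2 = 0 := by rw [hpar]; exact hk
  refine ⟨hp, ?_⟩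
  by_contra h
  push_neg at h
  have hfix := (perm_fix ℓ hpar hfwd hbwd).1 (ℓ k) (Nat.even_iff.mpr hp) h
  have := ℓ.injective hfix
  omega

/-- The four-to-one argument: a parity-preserving permutation `ℓ` of `{1,…,N}`
(`N ≥ 8`, coded by `Fin N` with index `k` standing for `(k : ℕ) + 1`) such that
whenever `k, ℓ(k)` are even, `k', ℓ(k')` are odd and `k' ≥ k + 3` one has
`ℓ(k') ≥ ℓ(k) + 3`, and the same for `ℓ⁻¹`, fixes every even number of index
`≤ N - 4` and every odd number other than `1` and `3`; moreover there are at
most `4` such permutations. -/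
theorem staircase_perm_four_to_one (N : ℕ) (hN : 8 ≤ N) (ℓ : Equiv.Perm (Fin N))
    (hpar : ∀ k : Fin N, ((ℓ k : ℕ) + 1) % 2 = ((k : ℕ) + 1) % 2)
    (hfwd : ∀ k k' : Fin N, Even ((k : ℕ) + 1) → Odd ((k' : ℕ) + 1) →
      (k' : ℕ) + 1 ≥ (k : ℕ) + 1 + 3 → (ℓ k' : ℕ) + 1 ≥ (ℓ k : ℕ) + 1 + 3)
    (hbwd : ∀ k k' : Fin N, Even ((k : ℕ) + 1) → Odd ((k' : ℕ) + 1) →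
      (k' : ℕ) + 1 ≥ (k : ℕ) + 1 + 3 → (ℓ.symm k' : ℕ) + 1 ≥ (ℓ.symm k : ℕ) + 1 + 3) :
    ((∀ k : Fin N, Even ((k : ℕ) + 1) → (k : ℕ) + 1 ≤ N - 4 → ℓ k = k) ∧
      (∀ k : Fin N, Odd ((k : ℕ) + 1) → (k : ℕ) + 1 ≠ 1 → (k : ℕ) + 1 ≠ 3 → ℓ k = k)) ∧
    Set.ncard {ℓ' : Equiv.Perm (Fin N) |
      (∀ k : Fin N, ((ℓ' k : ℕ) + 1) % 2 = ((k : ℕ) + 1) % 2) ∧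
      (∀ k k' : Fin N, Even ((k : ℕ) + 1) → Odd ((k' : ℕ) + 1) →
        (k' : ℕ) + 1 ≥ (k : ℕ) + 1 + 3 → (ℓ' k' : ℕ) + 1 ≥ (ℓ' k : ℕ) + 1 + 3) ∧
      (∀ k k' : Fin N, Even ((k : ℕ) + 1) → Odd ((k' : ℕ) + 1) →
        (k' : ℕ) + 1 ≥ (k : ℕ) + 1 + 3 → (ℓ'.symm k' : ℕ) + 1 ≥ (ℓ'.symm k : ℕ) + 1 + 3)} ≤ 4 := by
  constructor
  · constructor
    · intro k hk hle
      exact (perm_fix ℓ hpar hfwd hbwd).1 k hk (by omega)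
    · intro k hk h1 h3
      have h5 : 5 ≤ (k : ℕ) + 1 := by
        have := Nat.odd_iff.mp hk
        omega
      exact (perm_fix ℓ hpar hfwd hbwd).2 k hk h5
  · set i1 : Fin N := ⟨0, by omega⟩ with hi1def
    set i3 : Fin N := ⟨2, by omega⟩ with hi3def
    set e : Fin N := ⟨if N % 2 = 0 then N - 1 else N - 2, by split <;> omega⟩ with hedef
    set φ : Equiv.Perm (Fin N) → Bool × Bool :=
      fun ℓ' => (decide (ℓ' i1 = i1), decide (ℓ' e = e)) with hφdef
    have hv1 : (i1 : ℕ) = 0 := rfl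
    have hv3 : (i3 : ℕ) = 2 := rfl
    have hinj : Set.InjOn φ {ℓ' : Equiv.Perm (Fin N) |
        (∀ k : Fin N, ((ℓ' k : ℕ) + 1) % 2 = ((k : ℕ) + 1) % 2) ∧
        (∀ k k' : Fin N, Even ((k : ℕ) + 1) → Odd ((k' : ℕ) + 1) →
          (k' : ℕ) + 1 ≥ (k : ℕ) + 1 + 3 → (ℓ' k' : ℕ) + 1 ≥ (ℓ' k : ℕ) + 1 + 3) ∧
        (∀ k k' : Fin N, Even ((k : ℕ) + 1) → Odd ((k' : ℕ) + 1) →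
          (k' : ℕ) + 1 ≥ (k : ℕ) + 1 + 3 →
            (ℓ'.symm k' : ℕ) + 1 ≥ (ℓ'.symm k : ℕ) + 1 + 3)} := by
      rintro a ⟨hpa, hfa, hba⟩ b ⟨hpb, hfb, hbb⟩ hab
      simp only [hφdef, Prod.mk.injEq, decide_eq_decide] at hab
      obtain ⟨e1, e2⟩ := hab
      have Fa := perm_fix a hpa hfa hba
      have Fb := perm_fix b hpb hfb hbb
      have vA : ∀ x y : Fin N, (x : ℕ) ≠ (y : ℕ) → (a x : ℕ) ≠ (a y : ℕ) :=
        fun x y h hxy => h (congrArg Fin.val (a.injective (Fin.ext hxy)))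
      have vB : ∀ x y : Fin N, (x : ℕ) ≠ (y : ℕ) → (b x : ℕ) ≠ (b y : ℕ) :=
        fun x y h hxy => h (congrArg Fin.val (b.injective (Fin.ext hxy)))
      have e1v : ((a i1 : ℕ) = 0) ↔ ((b i1 : ℕ) = 0) := by
        constructor
        · intro h
          have h2 : a i1 = i1 := (by apply Fin.val_injective; omega)
          have := congrArg Fin.val (e1.mp h2)
          omega
        · intro h
          have h2 : b i1 = i1 := (by apply Fin.val_injective; omega)
          have := congrArg Fin.val (e1.mpr h2)
          omega
      ext k
      by_cases hpk : ((k : ℕ) + 1) % 2 = 1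
      · by_cases h5 : 5 ≤ (k : ℕ) + 1
        · rw [Fa.2 k (Nat.odd_iff.mpr hpk) h5, Fb.2 k (Nat.odd_iff.mpr hpk) h5]
        · push_neg at h5
          have hi1p : ((i1 : ℕ) + 1) % 2 = 1 := by omega
          have hi1s : (i1 : ℕ) + 1 < 5 := by omega
          have hi3p : ((i3 : ℕ) + 1) % 2 = 1 := by omega
          have hi3s : (i3 : ℕ) + 1 < 5 := by omega
          have sA1 := perm_small_odd a hpa hfa hba i1 hi1p hi1s
          have sB1 := perm_small_odd b hpb hfb hbb i1 hi1p hi1s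
          rcases (by omega : (k : ℕ) = 0 ∨ (k : ℕ) = 2) with hk0 | hk2
          · have hk1 : k = i1 := (by apply Fin.val_injective; omega)
            rw [hk1]
            by_cases ha1 : (a i1 : ℕ) = 0
            · have hA : a i1 = i1 := (by apply Fin.val_injective; omega)
              rw [hA, e1.mp hA]
            · have hb1 : ¬ (b i1 : ℕ) = 0 := fun h => ha1 (e1v.mpr h)
              omega
          · have hk3 : k = i3 := (by apply Fin.val_injective; omega)
            rw [hk3]
            have sA3 := perm_small_odd a hpa hfa hba i3 hi3p hi3s
            have sB3 := perm_small_odd b hpb hfb hbb i3 hi3p hi3s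
            have hA13 : (a i1 : ℕ) ≠ (a i3 : ℕ) := vA i1 i3 (by omega)
            have hB13 : (b i1 : ℕ) ≠ (b i3 : ℕ) := vB i1 i3 (by omega)
            by_cases ha1 : (a i1 : ℕ) = 0
            · have hb1 : (b i1 : ℕ) = 0 := e1v.mp ha1
              omega
            · have hb1 : ¬ (b i1 : ℕ) = 0 := fun h => ha1 (e1v.mpr h)
              omega
      · have hpk0 : ((k : ℕ) + 1) % 2 = 0 := by omega
        by_cases h3 : (k : ℕ) + 1 + 3 ≤ N
        · rw [Fa.1 k (Nat.even_iff.mpr hpk0) h3, Fb.1 k (Nat.even_iff.mpr hpk0) h3]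
        · push_neg at h3
          have hkN : (k : ℕ) < N := k.isLt
          have bAk := perm_big_even a hpa hfa hba k hpk0 h3
          have bBk := perm_big_even b hpb hfb hbb k hpk0 h3
          have haN : (a k : ℕ) < N := (a k).isLt
          have hbN : (b k : ℕ) < N := (b k).isLt
          by_cases hNe : N % 2 = 0
          · have heval : (e : ℕ) = N - 1 := by simp [hedef, hNe]
            have hep : ((e : ℕ) + 1) % 2 = 0 := by omega
            have he3 : N < (e : ℕ) + 1 + 3 := by omega
            have bAe := perm_big_even a hpa hfa hba e hep he3
            have bBe := perm_big_even b hpb hfb hbb e hep he3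
            have haeN : (a e : ℕ) < N := (a e).isLt
            have hbeN : (b e : ℕ) < N := (b e).isLt
            have e2v : ((a e : ℕ) = N - 1) ↔ ((b e : ℕ) = N - 1) := by
              constructor
              · intro h
                have h2 : a e = e := (by apply Fin.val_injective; omega)
                have := congrArg Fin.val (e2.mp h2)
                omega
              · intro h
                have h2 : b e = e := (by apply Fin.val_injective; omega)
                have := congrArg Fin.val (e2.mpr h2)
                omega
            rcases (by omega : (k : ℕ) = N - 1 ∨ (k : ℕ) = N - 3) with hk1 | hk1
            · have hke : k = e := (by apply Fin.val_injective; omega)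
              rw [hke]
              by_cases hae : (a e : ℕ) = N - 1
              · have hA : a e = e := (by apply Fin.val_injective; omega)
                rw [hA, e2.mp hA]
              · have hbe : ¬ (b e : ℕ) = N - 1 := fun h => hae (e2v.mpr h)
                omega
            · have hke : (k : ℕ) ≠ (e : ℕ) := by omega
              have hAke : (a k : ℕ) ≠ (a e : ℕ) := vA k e hke
              have hBke : (b k : ℕ) ≠ (b e : ℕ) := vB k e hke
              by_cases hae : (a e : ℕ) = N - 1
              · have hbe : (b e : ℕ) = N - 1 := e2v.mp hae
                omega
              · have hbe : ¬ (b e : ℕ) = N - 1 := fun h => hae (e2v.mpr h)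
                omega
          · omega
    have hmaps : ∀ a ∈ {ℓ' : Equiv.Perm (Fin N) |
        (∀ k : Fin N, ((ℓ' k : ℕ) + 1) % 2 = ((k : ℕ) + 1) % 2) ∧
        (∀ k k' : Fin N, Even ((k : ℕ) + 1) → Odd ((k' : ℕ) + 1) →
          (k' : ℕ) + 1 ≥ (k : ℕ) + 1 + 3 → (ℓ' k' : ℕ) + 1 ≥ (ℓ' k : ℕ) + 1 + 3) ∧
        (∀ k k' : Fin N, Even ((k : ℕ) + 1) → Odd ((k' : ℕ) + 1) →
          (k' : ℕ) + 1 ≥ (k : ℕ) + 1 + 3 →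
            (ℓ'.symm k' : ℕ) + 1 ≥ (ℓ'.symm k : ℕ) + 1 + 3)},
        φ a ∈ (Set.univ : Set (Bool × Bool)) := fun _ _ => Set.mem_univ _
    have hle := Set.ncard_le_ncard_of_injOn φ hmaps hinj Set.finite_univ
    have huniv : (Set.univ : Set (Bool × Bool)).ncard = 4 := by
      rw [Set.ncard_univ]
      simp [Nat.card_eq_fintype_card]
    omega
end

section
/- (No Helly property for piercing pairs of intervals, N = 3 case generalizable) There exist N ≥ 3 pairs of closed intervals (A_i, B_i), with A_i ⊆ [0,1] on one line and B_i ⊆ [0,1] on another, such that there is no pair of points (x, y) ∈ [0,1]² with (x ∈ A_i or y ∈ B_i) for all i = 1,…,N, yet for every proper subset S ⊊ {1,…,N} there exists a pair of points (x, y) with (x ∈ A_i or y ∈ B_i) for all i ∈ S. -/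
set_option maxHeartbeats 1000000


open Set

/-- No Helly property for piercing pairs of intervals: for every `N ≥ 3` there
are pairs of closed subintervals `(A i, B i)` of `[0,1]` such that no pair of
points `(x, y) ∈ [0,1]²` pierces all of them (i.e. satisfies `x ∈ A i ∨ y ∈ B i`
for every `i`), while for every proper subset `S` of the index set some pair of
points pierces all the pairs indexed by `S`. -/
theorem no_helly_for_piercing :
    ∀ N : ℕ, 3 ≤ N → ∃ A B : Fin N → Set ℝ,
      (∀ i, ∃ p q : ℝ, 0 ≤ p ∧ p ≤ q ∧ q ≤ 1 ∧ A i = Icc p q) ∧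
      (∀ i, ∃ p q : ℝ, 0 ≤ p ∧ p ≤ q ∧ q ≤ 1 ∧ B i = Icc p q) ∧
      (¬ ∃ x ∈ Icc (0 : ℝ) 1, ∃ y ∈ Icc (0 : ℝ) 1, ∀ i, x ∈ A i ∨ y ∈ B i) ∧
      (∀ S : Finset (Fin N), S ≠ Finset.univ →
        ∃ x ∈ Icc (0 : ℝ) 1, ∃ y ∈ Icc (0 : ℝ) 1, ∀ i ∈ S, x ∈ A i ∨ y ∈ B i) := by
  intro N hN
  have hNpos : 0 < N := by omega
  have hN0 : (0 : ℝ) < (N : ℝ) := by exact_mod_cast hNpos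
  have hN3 : (3 : ℝ) ≤ (N : ℝ) := by exact_mod_cast hN
  set n : ℝ := (N : ℝ) with hn
  refine ⟨(fun i => if i.val % 2 = 0 then
        (if i.val = N - 1 then Icc (1/(2*n)) (1/(2*n))
          else Icc (((i.val : ℝ) + 2)/n) 1)
      else Icc (1/n) ((i.val : ℝ)/n)),
    (fun i => if i.val % 2 = 0 then
        (if i.val = 0 then Icc (1/(2*n)) (1/(2*n)) else Icc (1/n) ((i.val : ℝ)/n))
      else (if i.val = N - 1 then Icc (1/(2*n)) (1/(2*n))
        else Icc (((i.val : ℝ) + 2)/n) 1)), ?_, ?_, ?_, ?_⟩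
  · -- A i are subintervals of [0,1]
    intro i
    dsimp only
    split_ifs with h1 h2
    · exact ⟨1/(2*n), 1/(2*n), by positivity, le_refl _,
        by rw [div_le_one (by positivity)]; linarith, rfl⟩
    · refine ⟨((i.val : ℝ) + 2)/n, 1, by positivity, ?_, le_refl _, rfl⟩
      rw [div_le_one hN0, hn]
      have h3 : (i.val : ℕ) + 2 ≤ N := by
        have := i.isLt; omega
      exact_mod_cast h3
    · refine ⟨1/n, (i.val : ℝ)/n, by positivity, ?_, ?_, rfl⟩
      · rw [div_le_div_iff_of_pos_right hN0]
        have h3 : 1 ≤ i.val := by omega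
        exact_mod_cast h3
      · rw [div_le_one hN0, hn]
        have h3 : i.val ≤ N := le_of_lt i.isLt
        exact_mod_cast h3
  · -- B i are subintervals of [0,1]
    intro i
    dsimp only
    split_ifs with h1 h2 h3
    · exact ⟨1/(2*n), 1/(2*n), by positivity, le_refl _,
        by rw [div_le_one (by positivity)]; linarith, rfl⟩
    · refine ⟨1/n, (i.val : ℝ)/n, by positivity, ?_, ?_, rfl⟩
      · rw [div_le_div_iff_of_pos_right hN0]
        have h4 : 1 ≤ i.val := by omega
        exact_mod_cast h4
      · rw [div_le_one hN0, hn]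
        have h4 : i.val ≤ N := le_of_lt i.isLt
        exact_mod_cast h4
    · exact ⟨1/(2*n), 1/(2*n), by positivity, le_refl _,
        by rw [div_le_one (by positivity)]; linarith, rfl⟩
    · refine ⟨((i.val : ℝ) + 2)/n, 1, by positivity, ?_, le_refl _, rfl⟩
      rw [div_le_one hN0, hn]
      have h4 : (i.val : ℕ) + 2 ≤ N := by
        have := i.isLt; omega
      exact_mod_cast h4
  · -- no pair of points pierces all pairs
    rintro ⟨x, ⟨hx0, hx1⟩, y, ⟨hy0, hy1⟩, hp⟩
    have hp' : ∀ k : ℕ, k < N →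
        (x ∈ (if k % 2 = 0 then
            (if k = N - 1 then Icc (1/(2*n)) (1/(2*n))
              else Icc (((k : ℝ) + 2)/n) 1)
          else Icc (1/n) ((k : ℝ)/n)) ∨
         y ∈ (if k % 2 = 0 then
            (if k = 0 then Icc (1/(2*n)) (1/(2*n)) else Icc (1/n) ((k : ℝ)/n))
          else (if k = N - 1 then Icc (1/(2*n)) (1/(2*n))
            else Icc (((k : ℝ) + 2)/n) 1))) := fun k hk => hp ⟨k, hk⟩
    by_cases hye : y = 1/(2*n)
    · -- case y = ε : use indices 1 and 2
      have h1 := hp' 1 (by omega)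
      rw [if_neg (by norm_num : ¬ (1:ℕ) % 2 = 0)] at h1
      rw [if_neg (by norm_num : ¬ (1:ℕ) % 2 = 0)] at h1
      rw [if_neg (show ¬ (1:ℕ) = N - 1 by omega)] at h1
      have hx1n : x = 1/n := by
        rcases h1 with h | h
        · rw [Set.mem_Icc] at h
          have h2 := h.2
          push_cast at h2
          linarith [h.1]
        · rw [Set.mem_Icc] at h
          have h1' := h.1
          push_cast at h1'
          have hcmp : 1/(2*n) < ((1:ℝ)+2)/n := by
            rw [div_lt_div_iff₀ (by positivity) hN0]; nlinarith
          rw [hye] at h1'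
          linarith
      have h2 := hp' 2 (by omega)
      rw [if_pos (by norm_num : (2:ℕ) % 2 = 0)] at h2
      rw [if_pos (by norm_num : (2:ℕ) % 2 = 0)] at h2
      rw [if_neg (show ¬ (2:ℕ) = 0 by omega)] at h2
      have heps1 : 1/(2*n) < 1/n := by
        rw [div_lt_div_iff₀ (by positivity) hN0]; nlinarith
      rcases h2 with h | h
      · by_cases h2N : (2:ℕ) = N - 1
        · rw [if_pos h2N] at h
          rw [Set.mem_Icc] at h
          linarith [h.1, h.2]
        · rw [if_neg h2N] at h
          rw [Set.mem_Icc] at h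
          have h1' := h.1
          push_cast at h1'
          have hcmp : 1/n < ((2:ℝ)+2)/n := by
            rw [div_lt_div_iff₀ hN0 hN0]; linarith
          linarith
      · rw [Set.mem_Icc] at h
        have h1' := h.1
        push_cast at h1'
        rw [hye] at h1'
        linarith
    · -- case y ≠ ε
      have h0 := hp' 0 (by omega)
      rw [if_pos (by norm_num : (0:ℕ) % 2 = 0)] at h0
      rw [if_neg (show ¬ (0:ℕ) = N - 1 by omega)] at h0
      rw [if_pos (by norm_num : (0:ℕ) % 2 = 0)] at h0
      rw [if_pos (rfl : (0:ℕ) = 0)] at h0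
      have hx2 : 2/n ≤ x := by
        rcases h0 with h | h
        · rw [Set.mem_Icc] at h
          have h1' := h.1
          push_cast at h1'
          linarith
        · rw [Set.mem_Icc] at h
          exact absurd (le_antisymm h.2 h.1) hye
      by_cases hxe : x = 1
      · -- x = 1 : use indices N-1 and N-2
        by_cases hNpar : (N - 1) % 2 = 0
        · have hL := hp' (N-1) (by omega)
          rw [if_pos hNpar] at hL
          rw [if_pos (rfl : N - 1 = N - 1)] at hL
          rw [if_pos hNpar] at hL
          rw [if_neg (show ¬ N - 1 = 0 by omega)] at hL
          have hyN1 : y ≤ ((N-1:ℕ) : ℝ)/n := by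
            rcases hL with h | h
            · rw [Set.mem_Icc] at h
              have hcmp : 1/(2*n) < 1 := by
                rw [div_lt_one (by positivity)]; linarith
              rw [hxe] at h
              linarith [h.2]
            · exact h.2
          have hM := hp' (N-2) (by omega)
          rw [if_neg (show ¬ (N-2) % 2 = 0 by omega)] at hM
          rw [if_neg (show ¬ (N-2) % 2 = 0 by omega)] at hM
          rw [if_neg (show ¬ N - 2 = N - 1 by omega)] at hM
          have hc2 : ((N-2:ℕ) : ℝ) = n - 2 := by
            rw [Nat.cast_sub (by omega)]; norm_num [hn]
          have hc1 : ((N-1:ℕ) : ℝ) = n - 1 := by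
            rw [Nat.cast_sub (by omega)]; norm_num [hn]
          rcases hM with h | h
          · rw [Set.mem_Icc] at h
            have hcmp : ((N-2:ℕ) : ℝ)/n < 1 := by
              rw [div_lt_one hN0, hc2]; linarith
            rw [hxe] at h
            linarith [h.2]
          · rw [Set.mem_Icc] at h
            have h1' : (((N-2:ℕ) : ℝ) + 2)/n = 1 := by
              rw [hc2]; field_simp; ring
            have h2' : ((N-1:ℕ) : ℝ)/n < 1 := by
              rw [div_lt_one hN0, hc1]; linarith
            linarith [h.1]
        · have hL := hp' (N-1) (by omega)
          rw [if_neg hNpar] at hL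
          rw [if_neg hNpar] at hL
          rw [if_pos (rfl : N - 1 = N - 1)] at hL
          rcases hL with h | h
          · rw [Set.mem_Icc] at h
            have hc1 : ((N-1:ℕ) : ℝ) = n - 1 := by
              rw [Nat.cast_sub (by omega)]; norm_num [hn]
            have hcmp : ((N-1:ℕ) : ℝ)/n < 1 := by
              rw [div_lt_one hN0, hc1]; linarith
            rw [hxe] at h
            linarith [h.2]
          · rw [Set.mem_Icc] at h
            exact absurd (le_antisymm h.2 h.1) hye
      · -- x < 1 : use indices around m = ⌊n*x⌋
        have hxlt : x < 1 := lt_of_le_of_ne hx1 hxe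
        set m : ℕ := ⌊n * x⌋₊ with hm
        have hm1 : (m : ℝ) ≤ n * x := Nat.floor_le (by positivity)
        have hm2 : n * x < (m : ℝ) + 1 := Nat.lt_floor_add_one _
        have hm3 : 2 ≤ m := by
          apply Nat.le_floor
          rw [div_le_iff₀ hN0] at hx2
          push_cast
          nlinarith
        have hm4 : m < N := by
          have hlt : n * x < (N : ℝ) := by nlinarith
          exact Nat.floor_lt (by positivity) |>.mpr hlt
        have hxm : (m : ℝ)/n ≤ x := by
          rw [div_le_iff₀ hN0]; nlinarith
        have hxm1 : x < ((m : ℝ) + 1)/n := by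
          rw [lt_div_iff₀ hN0]; nlinarith
        by_cases hmp : m % 2 = 0
        · -- m even : use indices m and m-1
          have hA := hp' m hm4
          rw [if_pos hmp] at hA
          rw [if_pos hmp] at hA
          rw [if_neg (show ¬ m = 0 by omega)] at hA
          have hym : y ≤ (m : ℝ)/n := by
            rcases hA with h | h
            · by_cases hmN : m = N - 1
              · rw [if_pos hmN] at h
                rw [Set.mem_Icc] at h
                have hcmp : 1/(2*n) < 2/n := by
                  rw [div_lt_div_iff₀ (by positivity) hN0]; nlinarith
                linarith [h.2, hx2]
              · rw [if_neg hmN] at h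
                rw [Set.mem_Icc] at h
                have hcmp : ((m : ℝ) + 2)/n ≤ x := h.1
                rw [div_le_iff₀ hN0] at hcmp
                nlinarith
            · exact h.2
          have hB := hp' (m-1) (by omega)
          rw [if_neg (show ¬ (m-1) % 2 = 0 by omega)] at hB
          rw [if_neg (show ¬ (m-1) % 2 = 0 by omega)] at hB
          rw [if_neg (show ¬ m - 1 = N - 1 by omega)] at hB
          have hcm1 : ((m-1:ℕ) : ℝ) = (m : ℝ) - 1 := by
            rw [Nat.cast_sub (by omega)]; norm_num
          rcases hB with h | h
          · rw [Set.mem_Icc] at h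
            have hcmp : ((m-1:ℕ) : ℝ)/n < (m : ℝ)/n := by
              rw [div_lt_div_iff₀ hN0 hN0, hcm1]; nlinarith
            linarith [h.2]
          · rw [Set.mem_Icc] at h
            have h1' : ((m : ℝ))/n < (((m-1:ℕ) : ℝ) + 2)/n := by
              rw [div_lt_div_iff₀ hN0 hN0, hcm1]; nlinarith
            linarith [h.1]
        · -- m odd : use indices m-1 and m-2
          have hA := hp' (m-1) (by omega)
          rw [if_pos (show (m-1) % 2 = 0 by omega)] at hA
          rw [if_neg (show ¬ m - 1 = N - 1 by omega)] at hA
          rw [if_pos (show (m-1) % 2 = 0 by omega)] at hA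
          rw [if_neg (show ¬ m - 1 = 0 by omega)] at hA
          have hcm1 : ((m-1:ℕ) : ℝ) = (m : ℝ) - 1 := by
            rw [Nat.cast_sub (by omega)]; norm_num
          have hcm2 : ((m-2:ℕ) : ℝ) = (m : ℝ) - 2 := by
            rw [Nat.cast_sub (by omega)]; norm_num
          have hym : y ≤ ((m-1:ℕ) : ℝ)/n := by
            rcases hA with h | h
            · rw [Set.mem_Icc] at h
              have hcmp : (((m-1:ℕ) : ℝ) + 2)/n ≤ x := h.1
              rw [div_le_iff₀ hN0, hcm1] at hcmp
              nlinarith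
            · exact h.2
          have hB := hp' (m-2) (by omega)
          rw [if_neg (show ¬ (m-2) % 2 = 0 by omega)] at hB
          rw [if_neg (show ¬ (m-2) % 2 = 0 by omega)] at hB
          rw [if_neg (show ¬ m - 2 = N - 1 by omega)] at hB
          rcases hB with h | h
          · rw [Set.mem_Icc] at h
            have hcmp : ((m-2:ℕ) : ℝ)/n < (m : ℝ)/n := by
              rw [div_lt_div_iff₀ hN0 hN0, hcm2]; nlinarith
            linarith [h.2]
          · rw [Set.mem_Icc] at h
            have h1' : ((m-1:ℕ) : ℝ)/n < (((m-2:ℕ) : ℝ) + 2)/n := by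
              rw [div_lt_div_iff₀ hN0 hN0, hcm1, hcm2]; nlinarith
            linarith [h.1]
  · -- every proper subfamily is pierceable
    intro S hS
    obtain ⟨j, hj⟩ : ∃ j : Fin N, j ∉ S := by
      by_contra h
      push_neg at h
      exact hS (Finset.eq_univ_iff_forall.mpr h)
    have hj1 : (j.val : ℕ) + 1 ≤ N := j.isLt
    have hj1' : ((j.val : ℝ) + 1)/n ≤ 1 := by
      rw [div_le_one hN0, hn]
      exact_mod_cast hj1
    refine ⟨((j.val : ℝ) + 1)/n, ⟨by positivity, hj1'⟩,
           ((j.val : ℝ) + 1)/n, ⟨by positivity, hj1'⟩, ?_⟩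
    intro i hiS
    dsimp only
    have hij : i.val ≠ j.val := by
      intro h
      exact hj (Fin.ext h ▸ hiS)
    by_cases hpar : i.val % 2 = 0
    · by_cases hlt : j.val < i.val
      · -- j < i, i even : use B_i = [1/n, i/n]
        right
        rw [if_pos hpar, if_neg (show ¬ i.val = 0 by omega)]
        simp only [Set.mem_Icc]
        constructor
        · rw [div_le_div_iff_of_pos_right hN0]
          have : (1:ℕ) ≤ j.val + 1 := by omega
          exact_mod_cast this
        · rw [div_le_div_iff_of_pos_right hN0]
          have : j.val + 1 ≤ i.val := by omega
          exact_mod_cast this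
      · -- j > i, i even : use A_i = [(i+2)/n, 1]
        left
        have hiN : ¬ i.val = N - 1 := by
          have := j.isLt; omega
        rw [if_pos hpar, if_neg hiN]
        simp only [Set.mem_Icc]
        refine ⟨?_, hj1'⟩
        rw [div_le_div_iff_of_pos_right hN0]
        have : i.val + 2 ≤ j.val + 1 := by omega
        exact_mod_cast this
    · by_cases hlt : j.val < i.val
      · -- j < i, i odd : use A_i = [1/n, i/n]
        left
        rw [if_neg hpar]
        simp only [Set.mem_Icc]
        constructor
        · rw [div_le_div_iff_of_pos_right hN0]
          have : (1:ℕ) ≤ j.val + 1 := by omega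
          exact_mod_cast this
        · rw [div_le_div_iff_of_pos_right hN0]
          have : j.val + 1 ≤ i.val := by omega
          exact_mod_cast this
      · -- j > i, i odd : use B_i = [(i+2)/n, 1]
        right
        have hiN : ¬ i.val = N - 1 := by
          have := j.isLt; omega
        rw [if_neg hpar, if_neg hiN]
        simp only [Set.mem_Icc]
        refine ⟨?_, hj1'⟩
        rw [div_le_div_iff_of_pos_right hN0]
        have : i.val + 2 ≤ j.val + 1 := by omega
        exact_mod_cast this
end
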